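/- Lyapunov matrix relations. Let S ∈ ℝ^{m×m} be symmetric with all eigenvalues in the open interval (−1,1) (so that I − S is invertible). Define the block matrices F = [[S, S],[0, S]] ∈ ℝ^{2m×2m}, G = [[I],[I]] ∈ ℝ^{2m×m}, H = [I, 0] ∈ ℝ^{m×2m}, and P = [[2I, (I−S)^{−1} − 2I], [(I−S)^{−1} − 2I, (I−S)^{−2} − 2(I−S)^{−1} + 2I]] ∈ ℝ^{2m×2m}. Then Gᵀ P (I − F) = H and Gᵀ P G = (I − S)^{−2}. -/

import Mathlib

open Finset Matrix

/-- **Lyapunov matrix relations.**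
Let `S ∈ ℝ^{m×m}` be symmetric with all eigenvalues in `(−1,1)`. With the block matrices
`F = [[S,S],[0,S]]`, `G = [[I],[I]]`, `H = [I, 0]` and
`P = [[2I, (I−S)⁻¹ − 2I], [(I−S)⁻¹ − 2I, (I−S)⁻² − 2(I−S)⁻¹ + 2I]]`,
one has `Gᵀ P (I − F) = H` and `Gᵀ P G = (I − S)⁻²`. -/
theorem lyapunov_matrix_relations
    (m : ℕ) (S : Matrix (Fin m) (Fin m) ℝ)
    (hS : S.IsHermitian)
    (hspec : ∀ μ ∈ spectrum ℝ S, μ ∈ Set.Ioo (-1 : ℝ) 1) :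
    let F : Matrix (Fin m ⊕ Fin m) (Fin m ⊕ Fin m) ℝ := Matrix.fromBlocks S S 0 S
    let G : Matrix (Fin m ⊕ Fin m) (Fin m) ℝ := Matrix.fromRows 1 1
    let H : Matrix (Fin m) (Fin m ⊕ Fin m) ℝ := Matrix.fromCols 1 0
    let P : Matrix (Fin m ⊕ Fin m) (Fin m ⊕ Fin m) ℝ :=
      Matrix.fromBlocks 2 ((1 - S)⁻¹ - 2) ((1 - S)⁻¹ - 2)
        ((1 - S)⁻¹ ^ 2 - 2 * (1 - S)⁻¹ + 2)
    Gᵀ * P * (1 - F) = H ∧ Gᵀ * P * G = (1 - S)⁻¹ ^ 2 := by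
  intro F G H P
  have h1 : (1 : ℝ) ∉ spectrum ℝ S := by
    intro h
    have := (hspec 1 h).2
    linarith
  have hu : IsUnit (1 - S) := by
    have := spectrum.notMem_iff.mp h1
    simpa using this
  have hdet : IsUnit (1 - S).det := (Matrix.isUnit_iff_isUnit_det _).mp hu
  set A := (1 - S)⁻¹ with hA
  have hAS : A * (1 - S) = 1 := Matrix.nonsing_inv_mul _ hdet
  have hGT : Gᵀ = Matrix.fromCols 1 1 := by
    simp [G, Matrix.transpose_fromRows]
  have hGP : Gᵀ * P = Matrix.fromCols A (A ^ 2 - A) := by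
    rw [hGT]
    show Matrix.fromCols 1 1 * Matrix.fromBlocks 2 (A - 2) (A - 2) (A ^ 2 - 2 * A + 2)
      = Matrix.fromCols A (A ^ 2 - A)
    have e1 : (1 : Matrix (Fin m) (Fin m) ℝ) * 2 + 1 * (A - 2) = A := by noncomm_ring
    have e2 : (1 : Matrix (Fin m) (Fin m) ℝ) * (A - 2) + 1 * (A ^ 2 - 2 * A + 2)
        = A ^ 2 - A := by noncomm_ring
    rw [Matrix.fromCols_mul_fromBlocks, e1, e2]
  have h1F : (1 : Matrix (Fin m ⊕ Fin m) (Fin m ⊕ Fin m) ℝ) - F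
      = Matrix.fromBlocks (1 - S) (0 - S) (0 - 0) (1 - S) := by
    rw [← Matrix.fromBlocks_one]
    ext (i | i) (j | j) <;> simp [Matrix.fromBlocks, F]
  constructor
  · rw [hGP, h1F, Matrix.fromCols_mul_fromBlocks]
    have key : A * (0 - S) + (A ^ 2 - A) * (1 - S) = A * A * (1 - S) - A := by
      noncomm_ring
    show Matrix.fromCols (A * (1 - S) + (A ^ 2 - A) * (0 - 0))
        (A * (0 - S) + (A ^ 2 - A) * (1 - S)) = H
    rw [key, mul_assoc, hAS, mul_one, sub_self]
    simp [H, hAS]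
  · rw [hGP]
    show Matrix.fromCols A (A ^ 2 - A) * Matrix.fromRows 1 1 = A ^ 2
    rw [Matrix.fromCols_mul_fromRows]
    noncomm_ring
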